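/- Helly's theorem with a finite transversal: Let n be a natural number, let {C_i}_{i ∈ ι} be a family of convex subsets of ℝⁿ (not assumed closed or bounded), and suppose there is a finite set P = {p₁, …, p_k} ⊆ ℝⁿ with the property that for every finite set I ⊆ ι with at most n + 1 elements there exists p ∈ P with p ∈ C_i for all i ∈ I. Then the intersection ⋂_{i ∈ ι} C_i is nonempty. -/

import Mathlib

/-- Helly's theorem with a finite transversal: if `{C i}` is a family of convex subsets
of `ℝⁿ` and `P` is a finite set of points such that every subfamily of at most `n + 1`
sets has a common point lying in `P`, then the whole family has a common point. -/
theorem helly_finite_transversal (n : ℕ) {ι : Type*}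
    (C : ι → Set (EuclideanSpace ℝ (Fin n)))
    (hconv : ∀ i, Convex ℝ (C i))
    (P : Finset (EuclideanSpace ℝ (Fin n)))
    (hP : ∀ I : Finset ι, I.card ≤ n + 1 → ∃ p ∈ P, ∀ i ∈ I, p ∈ C i) :
    (⋂ i, C i).Nonempty := by
  set D : ι → Set (EuclideanSpace ℝ (Fin n)) :=
    fun i => convexHull ℝ (C i ∩ (P : Set (EuclideanSpace ℝ (Fin n)))) with hD
  have hDsub : ∀ i, D i ⊆ C i := fun i =>
    (hconv i).convexHull_subset_iff.mpr Set.inter_subset_left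
  have h : (⋂ i, D i).Nonempty := by
    apply Convex.helly_theorem_compact' (𝕜 := ℝ)
      (fun i => convex_convexHull ℝ _)
      (fun i => ((P.finite_toSet.subset Set.inter_subset_right).isCompact_convexHull ℝ))
    intro I hI
    rw [finrank_euclideanSpace_fin] at hI
    obtain ⟨p, hpP, hp⟩ := hP I hI
    exact ⟨p, Set.mem_iInter₂.mpr fun i hi => subset_convexHull ℝ _ ⟨hp i hi, hpP⟩⟩
  obtain ⟨x, hx⟩ := h
  exact ⟨x, Set.mem_iInter.mpr fun i => hDsub i (Set.mem_iInter.mp hx i)⟩
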